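/- Let (G, C) be a characteristic pair with C = [C_1,...,C_r], let Ḡ be the reduced lex Gröbner basis of sat(C), and let C̄ be the W-characteristic set of ⟨Ḡ⟩. Then the set of leading variables of Ḡ equals the set of leading variables of G; equivalently, the parameters of C̄ coincide with the parameters of C. -/

import Mathlib

open MvPolynomial

namespace CharDec

variable {K : Type*} [Field K] {σ : Type*} [LinearOrder σ]

/-- Lexicographic comparison of exponent vectors (larger variables dominate):
`a ≤ b` iff `a = b` or at the greatest index where they differ, `a` is smaller. -/
def lexLe (a b : σ →₀ ℕ) : Prop :=
  a = b ∨ ∃ i : σ, a i < b i ∧ ∀ j : σ, i < j → a j = b j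

/-- `m` is the leading monomial of `f` with respect to the lex term ordering. -/
def IsLeadMon (f : MvPolynomial σ K) (m : σ →₀ ℕ) : Prop :=
  m ∈ f.support ∧ ∀ m' ∈ f.support, lexLe m' m

/-- `f` has leading (greatest actually occurring) variable `i`. -/
def HasLV (f : MvPolynomial σ K) (i : σ) : Prop :=
  i ∈ f.vars ∧ ∀ j ∈ f.vars, j ≤ i

/-- The coefficient of `(X i) ^ d` in `f`, as a polynomial in the remaining variables. -/
noncomputable def coeffWrt (i : σ) (d : ℕ) (f : MvPolynomial σ K) :
    MvPolynomial σ K :=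
  ∑ m ∈ f.support.filter (fun m => m i = d), monomial (m.update i 0) (f.coeff m)

/-- The initial (leading coefficient in the leading variable) of `f` with
respect to the variable `i`. -/
noncomputable def initialWrt (i : σ) (f : MvPolynomial σ K) : MvPolynomial σ K :=
  coeffWrt i (f.degreeOf i) f

/-- `R` is the pseudo-remainder of `P` on pseudo-division by `Q` with respect
to the variable `y` (classical pseudo-division, with the exponent
`deg P - deg Q + 1` when `deg P ≥ deg Q`, and `0` otherwise). -/
def IsPrem (y : σ) (Q P R : MvPolynomial σ K) : Prop :=
  ∃ A : MvPolynomial σ K,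
    (initialWrt y Q) ^ (P.degreeOf y + 1 - Q.degreeOf y) * P = A * Q + R ∧
    R.degreeOf y < Q.degreeOf y

/-- `IterPrem P L R` : `R` is the iterated pseudo-remainder of `P` by the
list `L` of pairs (leading variable, divisor), divisors being used from the
head of the list on. -/
def IterPrem : MvPolynomial σ K → List (σ × MvPolynomial σ K) →
    MvPolynomial σ K → Prop
  | P, [], R => R = P
  | P, e :: L, R => ∃ S, IsPrem e.1 e.2 P S ∧ IterPrem S L R

/-- A triangular set: a list of (leading variable, polynomial) pairs with
strictly increasing leading variables. -/
structure TriSet (K : Type*) [Field K] (σ : Type*) [LinearOrder σ] where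
  elems : List (σ × MvPolynomial σ K)
  sorted : elems.Pairwise (fun e e' => e.1 < e'.1)
  hlv : ∀ e ∈ elems, HasLV e.2 e.1

namespace TriSet

/-- The list of leading variables of a triangular set. -/
def lvs (T : TriSet K σ) : List σ := T.elems.map Prod.fst

/-- The list of polynomials of a triangular set. -/
def polys (T : TriSet K σ) : List (MvPolynomial σ K) := T.elems.map Prod.snd

/-- A variable is a parameter of `T` if it is not a leading variable of `T`. -/
def IsParam (T : TriSet K σ) (j : σ) : Prop := j ∉ T.lvs

/-- `T` is normal: every initial involves only the parameters of `T`. -/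
def Normal (T : TriSet K σ) : Prop :=
  ∀ e ∈ T.elems, ∀ j ∈ (initialWrt e.1 e.2).vars, T.IsParam j

/-- `T` is zero-dimensional: every variable is a leading variable of `T`. -/
def ZeroDim (T : TriSet K σ) : Prop := ∀ i : σ, i ∈ T.lvs

/-- The product of the initials of `T`. -/
noncomputable def prodInit (T : TriSet K σ) : MvPolynomial σ K :=
  (T.elems.map fun e => initialWrt e.1 e.2).prod

/-- The ideal generated by the polynomials of `T`. -/
noncomputable def ideal (T : TriSet K σ) : Ideal (MvPolynomial σ K) :=
  Ideal.span {p | ∃ e ∈ T.elems, p = e.2}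

end TriSet

/-- The saturation `I : J^∞` of an ideal `I` by an element `J`. -/
def satBy (I : Ideal (MvPolynomial σ K)) (J : MvPolynomial σ K) :
    Ideal (MvPolynomial σ K) where
  carrier := {p | ∃ k : ℕ, J ^ k * p ∈ I}
  zero_mem' := ⟨0, by simp⟩
  add_mem' := by
    rintro a b ⟨k, hk⟩ ⟨l, hl⟩
    refine ⟨k + l, ?_⟩
    have h : J ^ (k + l) * (a + b) = J ^ l * (J ^ k * a) + J ^ k * (J ^ l * b) := by ring
    rw [h]
    exact add_mem (Ideal.mul_mem_left _ _ hk) (Ideal.mul_mem_left _ _ hl)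
  smul_mem' := by
    rintro c a ⟨k, hk⟩
    refine ⟨k, ?_⟩
    have h : J ^ k * (c • a) = c * (J ^ k * a) := by rw [smul_eq_mul]; ring
    rw [h]
    exact Ideal.mul_mem_left _ _ hk

namespace TriSet

/-- The saturated ideal `sat(T) = ⟨T⟩ : (∏ initials)^∞` of a triangular set. -/
noncomputable def sat (T : TriSet K σ) : Ideal (MvPolynomial σ K) :=
  satBy T.ideal T.prodInit

/-- The triangular set formed by the first `i` elements of `T`. -/
def take (T : TriSet K σ) (i : ℕ) : TriSet K σ :=
  ⟨T.elems.take i, List.Pairwise.sublist (List.take_sublist i T.elems) T.sorted,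
    fun e he => T.hlv e (List.mem_of_mem_take he)⟩

/-- `T` is a regular set: each initial is neither zero nor a zero-divisor
modulo the saturated ideal of the preceding subset. -/
def Regular (T : TriSet K σ) : Prop :=
  ∀ i : ℕ, ∀ h : i < T.elems.length,
    initialWrt (T.elems.get ⟨i, h⟩).1 (T.elems.get ⟨i, h⟩).2 ∉ (T.take i).sat ∧
    ∀ p : MvPolynomial σ K,
      initialWrt (T.elems.get ⟨i, h⟩).1 (T.elems.get ⟨i, h⟩).2 * p ∈ (T.take i).sat →
        p ∈ (T.take i).sat

end TriSet

/-- The zero set, in (the algebraic closure of `K`)^σ, of a set of polynomials. -/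
def zeroSet (S : Set (MvPolynomial σ K)) : Set (σ → AlgebraicClosure K) :=
  {x | ∀ p ∈ S, aeval x p = 0}

/-- `Zero(T / ini(T))` : the common zeros of `T` at which no initial of `T` vanishes. -/
def TriSet.zeroQuasi (T : TriSet K σ) : Set (σ → AlgebraicClosure K) :=
  {x | (∀ e ∈ T.elems, aeval x e.2 = 0) ∧
       (∀ e ∈ T.elems, aeval x (initialWrt e.1 e.2) ≠ 0)}

/-- `G` is a (finite) Gröbner basis of `I` with respect to the lex term
ordering: `G ⊆ I` and the leading monomial of every nonzero element of `I` is
divisible by the leading monomial of some element of `G`. -/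
def IsGB (G : Set (MvPolynomial σ K)) (I : Ideal (MvPolynomial σ K)) : Prop :=
  G.Finite ∧ G ⊆ ↑I ∧
  ∀ f ∈ I, f ≠ 0 → ∃ g ∈ G, ∃ mf mg, IsLeadMon f mf ∧ IsLeadMon g mg ∧ ∀ j, mg j ≤ mf j

/-- `G` is the reduced lex Gröbner basis of `I`. -/
def IsReducedGB (G : Set (MvPolynomial σ K)) (I : Ideal (MvPolynomial σ K)) : Prop :=
  IsGB G I ∧ (0 : MvPolynomial σ K) ∉ G ∧
  (∀ g ∈ G, ∀ m, IsLeadMon g m → g.coeff m = 1) ∧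
  (∀ g ∈ G, ∀ g' ∈ G, g' ≠ g → ∀ m ∈ g.support, ∀ m', IsLeadMon g' m' →
    ¬ (∀ j, m' j ≤ m j))

/-- `C` is the W-characteristic set extracted from the (reduced lex Gröbner
basis) `G`: for each leading variable occurring in `G`, `C` contains the
lex-minimal element of `G` with that leading variable. -/
def IsWCharOf (C : TriSet K σ) (G : Set (MvPolynomial σ K)) : Prop :=
  (∀ e ∈ C.elems, e.2 ∈ G ∧
    ∀ g ∈ G, HasLV g e.1 → ∀ mg me, IsLeadMon g mg → IsLeadMon e.2 me → lexLe me mg) ∧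
  (∀ g ∈ G, ∀ i : σ, HasLV g i → i ∈ C.lvs)

/-- The Sylvester-style matrix of two univariate polynomials. -/
noncomputable def sylvester {R : Type*} [CommRing R] (f g : Polynomial R) :
    Matrix (Fin (f.natDegree + g.natDegree)) (Fin (f.natDegree + g.natDegree)) R :=
  Matrix.of fun i j =>
    if (i : ℕ) < g.natDegree then
      (if (i : ℕ) ≤ (j : ℕ) then f.coeff ((j : ℕ) - (i : ℕ)) else 0)
    else
      (if (i : ℕ) - g.natDegree ≤ (j : ℕ) then g.coeff ((j : ℕ) - ((i : ℕ) - g.natDegree))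
       else 0)

/-- The resultant of two univariate polynomials, as the determinant of their
Sylvester matrix. -/
noncomputable def resultantP {R : Type*} [CommRing R] (f g : Polynomial R) : R :=
  (sylvester f g).det

/-- View a multivariate polynomial as a univariate polynomial in the variable `i`. -/
noncomputable def toUni (i : σ) (f : MvPolynomial σ K) :
    Polynomial (MvPolynomial σ K) :=
  aeval (fun j => if j = i then Polynomial.X else Polynomial.C (X j)) f

/-- The resultant of two multivariate polynomials with respect to the variable `i`. -/
noncomputable def resWrt (i : σ) (f g : MvPolynomial σ K) : MvPolynomial σ K :=
  resultantP (toUni i f) (toUni i g)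

/-- The iterated resultant of `f` with respect to a list of
(leading variable, divisor) pairs, used from the head of the list on. -/
noncomputable def iterRes : MvPolynomial σ K → List (σ × MvPolynomial σ K) →
    MvPolynomial σ K
  | f, [] => f
  | f, e :: L => iterRes (resWrt e.1 f e.2) L

/-! ### Auxiliary development -/

section Aux

variable {K : Type*} [Field K] {σ : Type*} [LinearOrder σ]

lemma updApply (m : σ →₀ ℕ) (t : σ) (d : ℕ) (j : σ) :
    (m.update t d) j = if j = t then d else m j := by
  classical
  simp [Finsupp.update, Function.update_apply]

lemma upd_upd (m : σ →₀ ℕ) (t : σ) (d d' : ℕ) :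
    (m.update t d).update t d' = m.update t d' := by
  ext j; simp [updApply]

lemma upd_self (m : σ →₀ ℕ) (t : σ) : m.update t (m t) = m := by
  ext j; simp only [updApply]; split <;> simp_all

open Polynomial in
lemma coeff_coeffWrt (t : σ) (d : ℕ) (f : MvPolynomial σ K) (m : σ →₀ ℕ) :
    (coeffWrt t d f).coeff m = if m t = 0 then f.coeff (m.update t d) else 0 := by
  classical
  unfold coeffWrt
  rw [MvPolynomial.coeff_sum]
  by_cases hm : m t = 0
  · rw [if_pos hm]
    rw [Finset.sum_eq_single (m.update t d)]
    · rw [MvPolynomial.coeff_monomial]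
      have h1 : (m.update t d).update t 0 = m := by
        rw [upd_upd, ← hm, upd_self]
      rw [if_pos h1]
    · intro b hb hne
      rw [MvPolynomial.coeff_monomial, if_neg]
      intro hEq
      apply hne
      have hbt : b t = d := (Finset.mem_filter.mp hb).2
      calc b = (b.update t 0).update t d := by rw [upd_upd, ← hbt, upd_self]
        _ = m.update t d := by rw [hEq]
    · intro ha
      rw [MvPolynomial.coeff_monomial, if_pos (by rw [upd_upd, ← hm, upd_self])]
      by_contra hne
      apply ha
      rw [Finset.mem_filter]
      exact ⟨MvPolynomial.mem_support_iff.mpr hne, by simp [updApply]⟩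
  · rw [if_neg hm]
    apply Finset.sum_eq_zero
    intro b hb
    rw [MvPolynomial.coeff_monomial, if_neg]
    intro hEq
    apply hm
    have := congrArg (fun g => g t) hEq
    simpa [updApply] using this.symm

lemma mem_support_coeffWrt {t : σ} {d : ℕ} {f : MvPolynomial σ K} {m : σ →₀ ℕ} :
    m ∈ (coeffWrt t d f).support ↔ m t = 0 ∧ m.update t d ∈ f.support := by
  simp only [MvPolynomial.mem_support_iff, ne_eq, coeff_coeffWrt]
  by_cases hm : m t = 0 <;> simp [hm]

lemma update_mem_support_coeffWrt {t : σ} {d : ℕ} {f : MvPolynomial σ K} {m : σ →₀ ℕ}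
    (hm : m ∈ f.support) (hd : m t = d) : m.update t 0 ∈ (coeffWrt t d f).support := by
  rw [mem_support_coeffWrt]
  refine ⟨by simp [updApply], ?_⟩
  rwa [upd_upd, ← hd, upd_self]

lemma coeffWrt_eq_zero_iff {t : σ} {d : ℕ} {f : MvPolynomial σ K} :
    coeffWrt t d f = 0 ↔ ∀ m ∈ f.support, m t ≠ d := by
  constructor
  · intro h m hm hd
    have := update_mem_support_coeffWrt hm hd
    rw [h] at this
    simp at this
  · intro h
    ext m
    rw [coeff_coeffWrt]
    by_cases hm : m t = 0
    · rw [if_pos hm]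
      by_contra hne
      have : m.update t d ∈ f.support := by
        rw [MvPolynomial.mem_support_iff]
        simpa using hne
      exact h _ this (by simp [updApply])
    · simp [hm]

lemma degreeOf_coeffWrt_le (t' t : σ) (d : ℕ) (f : MvPolynomial σ K) :
    MvPolynomial.degreeOf t' (coeffWrt t d f) ≤ MvPolynomial.degreeOf t' f := by
  rw [MvPolynomial.degreeOf_le_iff]
  intro m hm
  rw [mem_support_coeffWrt] at hm
  have h2 := MvPolynomial.degreeOf_le_iff.mp (le_refl (MvPolynomial.degreeOf t' f)) _ hm.2
  by_cases hj : t' = t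
  · subst hj; simp [hm.1]
  · have : (m.update t d) t' = m t' := by simp [updApply, hj]
    omega

lemma degreeOf_coeffWrt_self (t : σ) (d : ℕ) (f : MvPolynomial σ K) :
    MvPolynomial.degreeOf t (coeffWrt t d f) = 0 := by
  rw [← Nat.le_zero, MvPolynomial.degreeOf_le_iff]
  intro m hm
  rw [mem_support_coeffWrt] at hm
  simp [hm.1]

omit [LinearOrder σ] in
lemma degreeOf_eq_zero_iff_forall {t : σ} {f : MvPolynomial σ K} :
    MvPolynomial.degreeOf t f = 0 ↔ ∀ m ∈ f.support, m t = 0 := by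
  rw [← Nat.le_zero, MvPolynomial.degreeOf_le_iff]
  simp

omit [LinearOrder σ] in
lemma degreeOf_eq_zero_of_not_mem_vars {t : σ} {f : MvPolynomial σ K} (h : t ∉ f.vars) :
    MvPolynomial.degreeOf t f = 0 := by
  rw [degreeOf_eq_zero_iff_forall]
  intro m hm
  by_contra hne
  exact h (MvPolynomial.mem_vars t |>.mpr ⟨m, hm, Finsupp.mem_support_iff.mpr hne⟩)

lemma coeffWrt_zero_of_degreeOf_eq_zero {t : σ} {f : MvPolynomial σ K}
    (h : MvPolynomial.degreeOf t f = 0) : coeffWrt t 0 f = f := by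
  ext m
  rw [coeff_coeffWrt]
  by_cases hm : m t = 0
  · rw [if_pos hm, ← hm, upd_self]
  · rw [if_neg hm]
    symm
    rw [← MvPolynomial.notMem_support_iff]
    intro hmem
    exact hm (degreeOf_eq_zero_iff_forall.mp h m hmem)

lemma mem_vars_of_mem_support_coeffWrt {t j : σ} {d : ℕ} {f : MvPolynomial σ K}
    (hj : j ∈ (coeffWrt t d f).vars) : j ∈ f.vars ∧ j ≠ t := by
  classical
  rw [MvPolynomial.mem_vars] at hj
  obtain ⟨m, hm, hjm⟩ := hj
  rw [mem_support_coeffWrt] at hm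
  have hjt : j ≠ t := by
    intro hEq; subst hEq
    rw [Finsupp.mem_support_iff] at hjm
    exact hjm hm.1
  refine ⟨MvPolynomial.mem_vars j |>.mpr ⟨m.update t d, hm.2, ?_⟩, hjt⟩
  rw [Finsupp.mem_support_iff] at hjm ⊢
  rwa [updApply, if_neg hjt]

end Aux
section Bridge

variable {K : Type*} [Field K] {σ : Type*} [LinearOrder σ]

lemma upd_add_single (m : σ →₀ ℕ) (t : σ) :
    m.update t 0 + Finsupp.single t (m t) = m := by
  ext j
  rcases eq_or_ne j t with h | h
  · subst h; simp [updApply]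
  · simp [updApply, h, Finsupp.single_eq_of_ne (Ne.symm h)]

lemma toUni_monomial (t : σ) (m : σ →₀ ℕ) (c : K) :
    toUni t (monomial m c)
      = Polynomial.C (monomial (m.update t 0) c) * Polynomial.X ^ (m t) := by
  classical
  unfold toUni
  rw [MvPolynomial.aeval_monomial]
  conv_lhs => rw [← upd_add_single m t]
  rw [Finsupp.prod_add_index (by intros; simp) (by intros; rw [pow_add])]
  rw [Finsupp.prod_single_index (by simp), if_pos rfl]
  have hprod : ((m.update t 0).prod fun i k =>
        (if i = t then Polynomial.X else Polynomial.C (MvPolynomial.X i)) ^ k)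
      = Polynomial.C ((m.update t 0).prod fun i k =>
          (MvPolynomial.X i : MvPolynomial σ K) ^ k) := by
    rw [Finsupp.prod, Finsupp.prod, map_prod]
    apply Finset.prod_congr rfl
    intro j hj
    have hjt : j ≠ t := by
      intro h; subst h
      rw [Finsupp.mem_support_iff] at hj
      simp [updApply] at hj
    rw [if_neg hjt, map_pow]
  have halg : algebraMap K (Polynomial (MvPolynomial σ K)) c
      = Polynomial.C (MvPolynomial.C c) := by
    rw [Polynomial.algebraMap_apply, MvPolynomial.algebraMap_eq]
  rw [hprod, MvPolynomial.monomial_eq, map_mul, halg]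
  ring

lemma toUni_sum_form (t : σ) (f : MvPolynomial σ K) :
    toUni t f = ∑ m ∈ f.support, toUni t (monomial m (f.coeff m)) := by
  unfold toUni
  conv_lhs => rw [f.as_sum]
  exact map_sum _ _ _

lemma coeff_toUni (t : σ) (f : MvPolynomial σ K) (d : ℕ) :
    (toUni t f).coeff d = coeffWrt t d f := by
  classical
  rw [toUni_sum_form, Polynomial.finset_sum_coeff]
  unfold coeffWrt
  rw [Finset.sum_filter]
  apply Finset.sum_congr rfl
  intro m _
  rw [toUni_monomial, Polynomial.coeff_C_mul, Polynomial.coeff_X_pow]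
  by_cases h : m t = d
  · simp [h]
  · simp [h, Ne.symm h]

lemma toUni_mul (t : σ) (a b : MvPolynomial σ K) :
    toUni t (a * b) = toUni t a * toUni t b := by
  unfold toUni; exact map_mul _ _ _

lemma toUni_pow (t : σ) (a : MvPolynomial σ K) (k : ℕ) :
    toUni t (a ^ k) = toUni t a ^ k := by
  unfold toUni; exact map_pow _ _ _

lemma toUni_sub (t : σ) (a b : MvPolynomial σ K) :
    toUni t (a - b) = toUni t a - toUni t b := by
  unfold toUni; exact map_sub _ _ _

lemma toUni_X (t : σ) : toUni t (X t : MvPolynomial σ K) = Polynomial.X := by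
  unfold toUni; rw [MvPolynomial.aeval_X, if_pos rfl]

lemma coeffWrt_add (t : σ) (d : ℕ) (a b : MvPolynomial σ K) :
    coeffWrt t d (a + b) = coeffWrt t d a + coeffWrt t d b := by
  rw [← coeff_toUni, ← coeff_toUni, ← coeff_toUni, ← Polynomial.coeff_add]
  congr 1
  unfold toUni; exact map_add _ _ _

lemma toUni_eq_C {t : σ} {s : MvPolynomial σ K} (h : MvPolynomial.degreeOf t s = 0) :
    toUni t s = Polynomial.C s := by
  refine Polynomial.ext fun d => ?_
  rw [coeff_toUni, Polynomial.coeff_C]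
  rcases Nat.eq_zero_or_pos d with hd | hd
  · subst hd
    rw [coeffWrt_zero_of_degreeOf_eq_zero h, if_pos rfl]
  · rw [if_neg (by omega), coeffWrt_eq_zero_iff]
    intro m hm
    have := degreeOf_eq_zero_iff_forall.mp h m hm
    omega

lemma natDegree_toUni (t : σ) (f : MvPolynomial σ K) :
    (toUni t f).natDegree = MvPolynomial.degreeOf t f := by
  by_cases hf : f = 0
  · subst hf
    have : toUni t (0 : MvPolynomial σ K) = 0 := by unfold toUni; exact map_zero _
    simp [this]
  · apply le_antisymm
    · rw [Polynomial.natDegree_le_iff_coeff_eq_zero]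
      intro N hN
      rw [coeff_toUni, coeffWrt_eq_zero_iff]
      intro m hm
      have := MvPolynomial.degreeOf_le_iff.mp (le_refl (MvPolynomial.degreeOf t f)) m hm
      omega
    · have hne : f.support.Nonempty := by
        rwa [MvPolynomial.support_nonempty]
      obtain ⟨m, hm, hsup⟩ := Finset.exists_mem_eq_sup f.support hne (fun m => m t)
      rw [MvPolynomial.degreeOf_eq_sup, hsup]
      apply Polynomial.le_natDegree_of_ne_zero
      rw [coeff_toUni]
      intro hzero
      exact (coeffWrt_eq_zero_iff.mp hzero) m hm rfl

lemma eval_toUni (t : σ) (f : MvPolynomial σ K) :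
    Polynomial.eval (X t) (toUni t f) = f := by
  classical
  rw [toUni_sum_form, Polynomial.eval_finset_sum]
  conv_rhs => rw [f.as_sum]
  apply Finset.sum_congr rfl
  intro m _
  rw [toUni_monomial, Polynomial.eval_mul, Polynomial.eval_C, Polynomial.eval_pow,
    Polynomial.eval_X, MvPolynomial.X_pow_eq_monomial, MvPolynomial.monomial_mul,
    mul_one, upd_add_single]

lemma toUni_ne_zero {t : σ} {f : MvPolynomial σ K} (hf : f ≠ 0) : toUni t f ≠ 0 := by
  intro h
  apply hf
  rw [← eval_toUni t f, h, Polynomial.eval_zero]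

lemma degreeOf_mul_eq_add {t : σ} {a b : MvPolynomial σ K} (ha : a ≠ 0) (hb : b ≠ 0) :
    MvPolynomial.degreeOf t (a * b)
      = MvPolynomial.degreeOf t a + MvPolynomial.degreeOf t b := by
  rw [← natDegree_toUni, ← natDegree_toUni, ← natDegree_toUni, toUni_mul,
    Polynomial.natDegree_mul (toUni_ne_zero ha) (toUni_ne_zero hb)]

lemma coeffWrt_mul_left {t : σ} {s : MvPolynomial σ K}
    (hs : MvPolynomial.degreeOf t s = 0) (d : ℕ) (f : MvPolynomial σ K) :
    coeffWrt t d (s * f) = s * coeffWrt t d f := by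
  rw [← coeff_toUni, toUni_mul, toUni_eq_C hs, Polynomial.coeff_C_mul, coeff_toUni]

lemma coeffWrt_mul_right {t : σ} {s : MvPolynomial σ K}
    (hs : MvPolynomial.degreeOf t s = 0) (d : ℕ) (f : MvPolynomial σ K) :
    coeffWrt t d (f * s) = coeffWrt t d f * s := by
  rw [mul_comm, coeffWrt_mul_left hs, mul_comm]

lemma sum_X_pow_coeffWrt {t : σ} {f : MvPolynomial σ K} {D : ℕ}
    (hD : MvPolynomial.degreeOf t f ≤ D) :
    f = ∑ d ∈ Finset.range (D + 1), X t ^ d * coeffWrt t d f := by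
  have h1 : toUni t f = ∑ i ∈ Finset.range (D + 1),
      Polynomial.monomial i ((toUni t f).coeff i) :=
    Polynomial.as_sum_range' _ _ (by rw [natDegree_toUni]; omega)
  conv_lhs => rw [← eval_toUni t f, h1]
  rw [Polynomial.eval_finset_sum]
  apply Finset.sum_congr rfl
  intro d _
  rw [Polynomial.eval_monomial, coeff_toUni, mul_comm]

lemma coeffWrt_X_pow_mul {t : σ} {h : MvPolynomial σ K}
    (hh : MvPolynomial.degreeOf t h = 0) (e d : ℕ) :
    coeffWrt t d (X t ^ e * h) = if d = e then h else 0 := by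
  rw [← coeff_toUni, toUni_mul, toUni_pow, toUni_X, toUni_eq_C hh,
    Polynomial.coeff_X_pow_mul']
  rcases lt_trichotomy d e with hc | hc | hc
  · rw [if_neg (by omega), if_neg (by omega)]
  · subst hc
    rw [if_pos (le_refl _), Nat.sub_self, Polynomial.coeff_C_zero, if_pos rfl]
  · rw [if_pos (by omega), Polynomial.coeff_C, if_neg (by omega), if_neg (by omega)]

lemma degreeOf_sub_le_max (t : σ) (a b : MvPolynomial σ K) :
    MvPolynomial.degreeOf t (a - b)
      ≤ max (MvPolynomial.degreeOf t a) (MvPolynomial.degreeOf t b) := by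
  rw [← natDegree_toUni, ← natDegree_toUni, ← natDegree_toUni, toUni_sub]
  exact Polynomial.natDegree_sub_le _ _

end Bridge
section PseudoDiv

variable {K : Type*} [Field K] {σ : Type*} [LinearOrder σ]

lemma coeffWrt_eq_zero_of_degreeOf_lt {t : σ} {f : MvPolynomial σ K} {d : ℕ}
    (h : MvPolynomial.degreeOf t f < d) : coeffWrt t d f = 0 :=
  coeffWrt_eq_zero_iff.mpr fun m hm => by
    have := MvPolynomial.degreeOf_le_iff.mp
      (le_refl (MvPolynomial.degreeOf t f)) m hm
    omega

lemma degreeOf_le_of_coeffWrt {t : σ} {f : MvPolynomial σ K} {D : ℕ}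
    (h : ∀ j, D < j → coeffWrt t j f = 0) : MvPolynomial.degreeOf t f ≤ D := by
  rw [MvPolynomial.degreeOf_le_iff]
  intro m hm
  by_contra hgt
  have h0 := h (m t) (by omega)
  have h1 := update_mem_support_coeffWrt (t := t) (d := m t) hm rfl
  rw [h0] at h1
  simp at h1

lemma initialWrt_eq_leadingCoeff (t : σ) (Q : MvPolynomial σ K) :
    initialWrt t Q = (toUni t Q).leadingCoeff := by
  rw [Polynomial.leadingCoeff, natDegree_toUni, coeff_toUni]
  rfl

lemma initialWrt_ne_zero {t : σ} {Q : MvPolynomial σ K} (hQ : Q ≠ 0) :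
    initialWrt t Q ≠ 0 := by
  rw [initialWrt_eq_leadingCoeff, Polynomial.leadingCoeff_ne_zero]
  exact toUni_ne_zero hQ

lemma degreeOf_initialWrt_self (t : σ) (Q : MvPolynomial σ K) :
    MvPolynomial.degreeOf t (initialWrt t Q) = 0 :=
  degreeOf_coeffWrt_self t _ Q

lemma degreeOf_initialWrt_le (t' t : σ) (Q : MvPolynomial σ K) :
    MvPolynomial.degreeOf t' (initialWrt t Q) ≤ MvPolynomial.degreeOf t' Q :=
  degreeOf_coeffWrt_le t' t _ Q

lemma degreeOf_mul_eq_zero {t : σ} {a b : MvPolynomial σ K}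
    (ha : MvPolynomial.degreeOf t a = 0) (hb : MvPolynomial.degreeOf t b = 0) :
    MvPolynomial.degreeOf t (a * b) = 0 := by
  have := MvPolynomial.degreeOf_mul_le t a b
  omega

lemma degreeOf_pow_eq_zero {t : σ} {a : MvPolynomial σ K} (k : ℕ)
    (ha : MvPolynomial.degreeOf t a = 0) :
    MvPolynomial.degreeOf t (a ^ k) = 0 := by
  induction k with
  | zero => simpa using degreeOf_eq_zero_of_not_mem_vars (by simp [MvPolynomial.vars_one])
  | succ k ih => rw [pow_succ]; exact degreeOf_mul_eq_zero ih ha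

lemma degreeOf_X_pow_eq_zero {t t' : σ} (h : t' ≠ t) (e : ℕ) :
    MvPolynomial.degreeOf t' ((X t : MvPolynomial σ K) ^ e) = 0 := by
  apply degreeOf_eq_zero_of_not_mem_vars
  intro hmem
  have := MvPolynomial.vars_pow (X t : MvPolynomial σ K) e hmem
  rw [MvPolynomial.vars_X] at this
  simp at this
  exact h this

lemma pseudoDiv (t : σ) (Q : MvPolynomial σ K) (hQ : 1 ≤ MvPolynomial.degreeOf t Q)
    (h : MvPolynomial σ K) : ∃ (N : ℕ) (B r : MvPolynomial σ K),
      (initialWrt t Q) ^ N * h = B * Q + r ∧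
      MvPolynomial.degreeOf t r < MvPolynomial.degreeOf t Q ∧
      ∀ t', MvPolynomial.degreeOf t' Q = 0 →
        MvPolynomial.degreeOf t' r ≤ MvPolynomial.degreeOf t' h := by
  classical
  suffices H : ∀ k (h : MvPolynomial σ K), MvPolynomial.degreeOf t h ≤ k →
      ∃ (N : ℕ) (B r : MvPolynomial σ K),
      (initialWrt t Q) ^ N * h = B * Q + r ∧
      MvPolynomial.degreeOf t r < MvPolynomial.degreeOf t Q ∧
      (∀ t', MvPolynomial.degreeOf t' Q = 0 →
        MvPolynomial.degreeOf t' r ≤ MvPolynomial.degreeOf t' h) by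
    exact H _ h le_rfl
  intro k
  induction k using Nat.strong_induction_on with
  | _ k IH =>
    intro h hk
    by_cases hlt : MvPolynomial.degreeOf t h < MvPolynomial.degreeOf t Q
    · exact ⟨0, 0, h, by ring, hlt, fun t' _ => le_rfl⟩
    · push_neg at hlt
      set dq := MvPolynomial.degreeOf t Q with hdq
      set D := MvPolynomial.degreeOf t h with hD
      have hD1 : 1 ≤ D := le_trans hQ hlt
      set i := initialWrt t Q with hi
      set c := coeffWrt t D h with hc
      have hifree : MvPolynomial.degreeOf t i = 0 := degreeOf_initialWrt_self t Q
      have hcfree : MvPolynomial.degreeOf t c = 0 := degreeOf_coeffWrt_self t D h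
      set h' := i * h - c * X t ^ (D - dq) * Q with hh'
      have hcoeff : ∀ j, D ≤ j → coeffWrt t j h' = 0 := by
        intro j hj
        rw [← coeff_toUni, hh', toUni_sub, toUni_mul, toUni_mul, toUni_mul, toUni_pow,
          toUni_X, toUni_eq_C hifree, toUni_eq_C hcfree, Polynomial.coeff_sub,
          Polynomial.coeff_C_mul, mul_assoc, Polynomial.coeff_C_mul,
          Polynomial.coeff_X_pow_mul', if_pos (by omega), coeff_toUni, coeff_toUni]
        rcases eq_or_lt_of_le hj with hjD | hjD
        · rw [← hjD]
          have h1 : D - (D - dq) = dq := by omega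
          rw [h1]
          show i * c - c * i = 0
          ring
        · rw [coeffWrt_eq_zero_of_degreeOf_lt
              (show MvPolynomial.degreeOf t h < j by omega),
            coeffWrt_eq_zero_of_degreeOf_lt
              (show MvPolynomial.degreeOf t Q < j - (D - dq) by omega)]
          ring
      have hdeg' : MvPolynomial.degreeOf t h' ≤ D - 1 :=
        degreeOf_le_of_coeffWrt fun j hj => hcoeff j (by omega)
      obtain ⟨N, B, r, heq, hr, hfree⟩ := IH (D - 1) (by omega) h' (by omega)
      refine ⟨N + 1, i ^ N * c * X t ^ (D - dq) + B, r, ?_, hr, ?_⟩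
      · have hstep : i ^ (N + 1) * h = i ^ N * h' + i ^ N * (c * X t ^ (D - dq)) * Q := by
          rw [hh']; ring
        rw [hstep, heq]; ring
      · intro t' ht'
        have htne : t' ≠ t := by
          intro hEq; subst hEq; omega
        have h1 : MvPolynomial.degreeOf t' r ≤ MvPolynomial.degreeOf t' h' := hfree t' ht'
        have h2 : MvPolynomial.degreeOf t' h' ≤ MvPolynomial.degreeOf t' h := by
          have hih : MvPolynomial.degreeOf t' (i * h) ≤ MvPolynomial.degreeOf t' h := by
            have hile : MvPolynomial.degreeOf t' i = 0 := by
              rw [hi]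
              have := degreeOf_initialWrt_le t' t Q
              omega
            have := MvPolynomial.degreeOf_mul_le t' i h
            omega
          have hcq : MvPolynomial.degreeOf t' (c * X t ^ (D - dq) * Q)
              ≤ MvPolynomial.degreeOf t' h := by
            have hcle : MvPolynomial.degreeOf t' c ≤ MvPolynomial.degreeOf t' h :=
              degreeOf_coeffWrt_le t' t D h
            have hx := degreeOf_X_pow_eq_zero (K := K) htne (D - dq)
            have m1 := MvPolynomial.degreeOf_mul_le t' (c * X t ^ (D - dq)) Q
            have m2 := MvPolynomial.degreeOf_mul_le t' c (X t ^ (D - dq))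
            omega
          have := degreeOf_sub_le_max t' (i * h) (c * X t ^ (D - dq) * Q)
          rw [← hh'] at this
          omega
        exact le_trans h1 h2

end PseudoDiv
section StepLemma

variable {K : Type*} [Field K] {σ : Type*} [LinearOrder σ]

/-- The ideal generated by the members of a list. -/
noncomputable def spanList (l : List (MvPolynomial σ K)) : Ideal (MvPolynomial σ K) :=
  Ideal.span {p | p ∈ l}

lemma spanList_nil : spanList ([] : List (MvPolynomial σ K)) = ⊥ := by
  unfold spanList
  convert Ideal.span_empty
  simp

lemma spanList_append_singleton (l : List (MvPolynomial σ K)) (a : MvPolynomial σ K) :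
    spanList (l ++ [a]) = Ideal.span (insert a {p | p ∈ l}) := by
  unfold spanList
  congr 1
  ext p
  simp [or_comm]

lemma mem_spanList {l : List (MvPolynomial σ K)} {p : MvPolynomial σ K} (hp : p ∈ l) :
    p ∈ spanList l :=
  Ideal.subset_span hp

lemma spanList_mono {l l' : List (MvPolynomial σ K)} (h : ∀ p ∈ l, p ∈ l') :
    spanList l ≤ spanList l' :=
  Ideal.span_mono h

omit [LinearOrder σ] in
lemma coeffWrt_zero_poly (t : σ) (d : ℕ) : coeffWrt t d (0 : MvPolynomial σ K) = 0 := by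
  unfold coeffWrt
  simp

lemma coeffWrt_sum {t : σ} {d : ℕ} {α : Type*} (s : Finset α) (F : α → MvPolynomial σ K) :
    coeffWrt t d (∑ x ∈ s, F x) = ∑ x ∈ s, coeffWrt t d (F x) := by
  classical
  induction s using Finset.cons_induction with
  | empty => simp [coeffWrt_zero_poly]
  | cons a s ha ih =>
    rw [Finset.sum_cons, Finset.sum_cons, coeffWrt_add, ih]

omit [LinearOrder σ] in
lemma degreeOf_zero_poly (t : σ) : MvPolynomial.degreeOf t (0 : MvPolynomial σ K) = 0 := by
  simp [MvPolynomial.degreeOf_eq_sup]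

lemma degreeOf_sum_le {t : σ} {D : ℕ} {α : Type*} (s : Finset α) (F : α → MvPolynomial σ K)
    (h : ∀ x ∈ s, MvPolynomial.degreeOf t (F x) ≤ D) :
    MvPolynomial.degreeOf t (∑ x ∈ s, F x) ≤ D := by
  classical
  induction s using Finset.cons_induction with
  | empty => simp [degreeOf_zero_poly]
  | cons a s ha ih =>
    rw [Finset.sum_cons]
    have h1 := MvPolynomial.degreeOf_add_le t (F a) (∑ x ∈ s, F x)
    have h2 := h a (Finset.mem_cons_self a s)
    have h3 := ih fun x hx => h x (Finset.mem_cons.mpr (Or.inr hx))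
    omega

lemma step_lemma {t : σ} {Q : MvPolynomial σ K} (hQdeg : 1 ≤ MvPolynomial.degreeOf t Q)
    (hQ0 : Q ≠ 0)
    {l : List (MvPolynomial σ K)} (hl : ∀ p ∈ l, MvPolynomial.degreeOf t p = 0)
    {g : MvPolynomial σ K} (hg : MvPolynomial.degreeOf t g < MvPolynomial.degreeOf t Q)
    (hmem : g ∈ Ideal.span (insert Q {p | p ∈ l})) :
    ∃ N : ℕ, ∀ j : ℕ, (initialWrt t Q) ^ N * coeffWrt t j g ∈ spanList l := by
  classical
  set i := initialWrt t Q with hi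
  set dq := MvPolynomial.degreeOf t Q with hdq
  have hifree : MvPolynomial.degreeOf t i = 0 := by
    rw [hi]; exact degreeOf_initialWrt_self t Q
  have hipow : ∀ k : ℕ, MvPolynomial.degreeOf t (i ^ k) = 0 :=
    fun k => degreeOf_pow_eq_zero k hifree
  obtain ⟨A, z₀, hz₀, hgeq⟩ := Ideal.mem_span_insert.mp hmem
  obtain ⟨c, hsupp, hsum⟩ := Submodule.mem_span_set.mp hz₀
  choose Nf Bf rf hfeq hfdeg hffree using
    fun p : MvPolynomial σ K => pseudoDiv t Q hQdeg (c p)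
  set E := c.support.sup Nf with hE
  -- the combined equation
  have hz₀sum : z₀ = ∑ p ∈ c.support, c p * p := by
    rw [← hsum, Finsupp.sum]
    apply Finset.sum_congr rfl
    intro p _
    rw [smul_eq_mul]
  set ρ := ∑ p ∈ c.support, i ^ (E - Nf p) * rf p * p with hρ
  set W := i ^ E * A + ∑ p ∈ c.support, i ^ (E - Nf p) * Bf p * p with hW
  have hterm : ∀ p ∈ c.support, i ^ E * (c p * p)
      = (i ^ (E - Nf p) * Bf p * p) * Q + i ^ (E - Nf p) * rf p * p := by
    intro p hp
    have hsplit : i ^ E = i ^ (E - Nf p) * i ^ Nf p := by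
      rw [← pow_add]
      congr 1
      have := Finset.le_sup (f := Nf) hp
      omega
    calc i ^ E * (c p * p)
        = i ^ (E - Nf p) * (i ^ Nf p * c p) * p := by rw [hsplit]; ring
      _ = i ^ (E - Nf p) * (Bf p * Q + rf p) * p := by rw [hi, hfeq]
      _ = _ := by ring
  have hkey : i ^ E * g = W * Q + ρ := by
    calc i ^ E * g
        = i ^ E * A * Q + ∑ p ∈ c.support, i ^ E * (c p * p) := by
          rw [hgeq, hz₀sum, mul_add, Finset.mul_sum, ← mul_assoc]
      _ = i ^ E * A * Q + ∑ p ∈ c.support,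
            ((i ^ (E - Nf p) * Bf p * p) * Q + i ^ (E - Nf p) * rf p * p) := by
          rw [Finset.sum_congr rfl hterm]
      _ = W * Q + ρ := by
          rw [Finset.sum_add_distrib, hW, hρ, add_mul, Finset.sum_mul]; ring
  have hρdeg : MvPolynomial.degreeOf t ρ < dq := by
    rw [hρ]
    have : MvPolynomial.degreeOf t (∑ p ∈ c.support, i ^ (E - Nf p) * rf p * p) ≤ dq - 1 := by
      apply degreeOf_sum_le
      intro p hp
      have h1 := MvPolynomial.degreeOf_mul_le t (i ^ (E - Nf p) * rf p) p
      have h2 := MvPolynomial.degreeOf_mul_le t (i ^ (E - Nf p)) (rf p)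
      have h3 := hipow (E - Nf p)
      have h4 := hfdeg p
      have h5 := hl p (hsupp hp)
      omega
    omega
  have hW0 : W = 0 := by
    by_contra hW0
    have h1 : MvPolynomial.degreeOf t (W * Q) < dq := by
      have heq2 : W * Q = i ^ E * g - ρ := by rw [hkey]; ring
      have h2 := degreeOf_sub_le_max t (i ^ E * g) ρ
      rw [← heq2] at h2
      have h3 := MvPolynomial.degreeOf_mul_le t (i ^ E) g
      have h4 := hipow E
      omega
    rw [degreeOf_mul_eq_add hW0 hQ0] at h1
    omega
  rw [hW0, zero_mul, zero_add] at hkey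
  refine ⟨E, fun j => ?_⟩
  have : i ^ E * coeffWrt t j g = coeffWrt t j (i ^ E * g) := by
    rw [coeffWrt_mul_left (hipow E)]
  rw [this, hkey, hρ, coeffWrt_sum]
  apply Ideal.sum_mem
  intro p hp
  have hpfree : MvPolynomial.degreeOf t p = 0 := hl p (hsupp hp)
  rw [coeffWrt_mul_right hpfree]
  exact Ideal.mul_mem_left _ _ (mem_spanList (hsupp hp))
end StepLemma
section Triangular

variable {K : Type*} [Field K] {σ : Type*} [LinearOrder σ]

lemma HasLV.ne_zero' {f : MvPolynomial σ K} {l : σ} (h : HasLV f l) : f ≠ 0 := by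
  intro h0
  have := h.1
  rw [h0] at this
  simp [MvPolynomial.vars_0] at this

lemma HasLV.degreeOf_pos {f : MvPolynomial σ K} {l : σ} (h : HasLV f l) :
    1 ≤ MvPolynomial.degreeOf l f := by
  obtain ⟨m, hm, hl⟩ := (MvPolynomial.mem_vars l).mp h.1
  rw [MvPolynomial.degreeOf_eq_sup]
  have h1 : 1 ≤ m l := by
    rw [Finsupp.mem_support_iff] at hl
    omega
  exact le_trans h1 (Finset.le_sup (f := fun m => m l) hm)

lemma HasLV.degreeOf_eq_zero_of_lt {f : MvPolynomial σ K} {l t : σ} (h : HasLV f l)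
    (hlt : l < t) : MvPolynomial.degreeOf t f = 0 := by
  apply degreeOf_eq_zero_of_not_mem_vars
  intro hmem
  exact absurd (h.2 t hmem) (not_le.mpr hlt)

lemma degreeOf_list_prod_eq_zero {t : σ} {l : List (MvPolynomial σ K)}
    (h : ∀ p ∈ l, MvPolynomial.degreeOf t p = 0) :
    MvPolynomial.degreeOf t l.prod = 0 := by
  induction l with
  | nil =>
    simp only [List.prod_nil]
    exact degreeOf_eq_zero_of_not_mem_vars (by simp [MvPolynomial.vars_one])
  | cons a l ih =>
    rw [List.prod_cons]
    exact degreeOf_mul_eq_zero (h a (by simp)) (ih fun p hp => h p (by simp [hp]))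

lemma list_prod_ne_zero {l : List (MvPolynomial σ K)} (h : ∀ p ∈ l, p ≠ 0) :
    l.prod ≠ 0 := by
  induction l with
  | nil => simp
  | cons a l ih =>
    rw [List.prod_cons]
    exact mul_ne_zero (h a (by simp)) (ih fun p hp => h p (by simp [hp]))

lemma sorted_last {β : Type*} {L' : List (σ × β)} {e : σ × β}
    (h : ((L' ++ [e]).map Prod.fst).Pairwise (· < ·)) :
    (L'.map Prod.fst).Pairwise (· < ·) ∧ ∀ e' ∈ L', e'.1 < e.1 := by
  rw [List.map_append] at h
  have h2 := List.pairwise_append.mp h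
  exact ⟨h2.1, fun e' he' => h2.2.2 e'.1 (List.mem_map_of_mem (f := Prod.fst) he') e.1 (by simp)⟩

/-- CT2: a polynomial reduced with respect to a normal triangular list, lying in the
ideal generated by the list up to a nonzero multiplier avoiding the leading variables,
must be zero. -/
lemma reduced_mem_span_eq_zero (L : List (σ × MvPolynomial σ K)) :
    (L.map Prod.fst).Pairwise (· < ·) →
    (∀ e ∈ L, HasLV e.2 e.1) →
    (∀ e ∈ L, ∀ e' ∈ L, MvPolynomial.degreeOf e'.1 (initialWrt e.1 e.2) = 0) →
    ∀ s ρ : MvPolynomial σ K, s ≠ 0 →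
    (∀ e ∈ L, MvPolynomial.degreeOf e.1 s = 0) →
    (∀ e ∈ L, MvPolynomial.degreeOf e.1 ρ < MvPolynomial.degreeOf e.1 e.2) →
    s * ρ ∈ spanList (L.map Prod.snd) → ρ = 0 := by
  induction L using List.reverseRecOn with
  | nil =>
    intro _ _ _ s ρ hs _ _ hmem
    rw [List.map_nil, spanList_nil, Ideal.mem_bot] at hmem
    rcases mul_eq_zero.mp hmem with h | h
    · exact absurd h hs
    · exact h
  | append_singleton L' e IH =>
    obtain ⟨t, Q⟩ := e
    intro hsort hlv hnorm s ρ hs hsfree hred hmem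
    have hmemL : (t, Q) ∈ L' ++ [(t, Q)] := by simp
    have hQlv : HasLV Q t := hlv _ hmemL
    have hQdeg : 1 ≤ MvPolynomial.degreeOf t Q := hQlv.degreeOf_pos
    have hQ0 : Q ≠ 0 := hQlv.ne_zero'
    obtain ⟨hsort', hlt⟩ := sorted_last hsort
    have hmem' : ∀ e' ∈ L', e' ∈ L' ++ [(t, Q)] := fun e' he' => by simp [he']
    have hlfree : ∀ p ∈ L'.map Prod.snd, MvPolynomial.degreeOf t p = 0 := by
      intro p hp
      obtain ⟨e', he', rfl⟩ := List.mem_map.mp hp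
      exact (hlv _ (hmem' e' he')).degreeOf_eq_zero_of_lt (hlt e' he')
    have hgdeg : MvPolynomial.degreeOf t (s * ρ) < MvPolynomial.degreeOf t Q := by
      have h1 := MvPolynomial.degreeOf_mul_le t s ρ
      have h2 : MvPolynomial.degreeOf t s = 0 := hsfree _ hmemL
      have h3 : MvPolynomial.degreeOf t ρ < MvPolynomial.degreeOf t Q := hred _ hmemL
      omega
    have hspan : s * ρ ∈ Ideal.span (insert Q {p | p ∈ L'.map Prod.snd}) := by
      rw [← spanList_append_singleton]
      have : (L' ++ [(t, Q)]).map Prod.snd = L'.map Prod.snd ++ [Q] := by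
        rw [List.map_append]; rfl
      rwa [this] at hmem
    obtain ⟨N, hN⟩ := step_lemma hQdeg hQ0 hlfree hgdeg hspan
    set i := initialWrt t Q with hi
    have hi0 : i ≠ 0 := initialWrt_ne_zero hQ0
    set s' := i ^ N * s with hs'
    have hs'0 : s' ≠ 0 := mul_ne_zero (pow_ne_zero _ hi0) hs
    have hcoef : ∀ j, s' * coeffWrt t j ρ ∈ spanList (L'.map Prod.snd) := by
      intro j
      have hsfreet : MvPolynomial.degreeOf t s = 0 := hsfree _ hmemL
      have h1 : s' * coeffWrt t j ρ = i ^ N * coeffWrt t j (s * ρ) := by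
        rw [coeffWrt_mul_left hsfreet, hs']; ring
      rw [h1]
      exact hN j
    have hzero : ∀ j, coeffWrt t j ρ = 0 := by
      intro j
      refine IH hsort' (fun e' he' => hlv _ (hmem' e' he'))
        (fun e' he' e'' he'' => hnorm _ (hmem' e' he') _ (hmem' e'' he''))
        s' (coeffWrt t j ρ) hs'0 ?_ ?_ (hcoef j)
      · intro e' he'
        apply degreeOf_mul_eq_zero
        · exact degreeOf_pow_eq_zero N
            (show MvPolynomial.degreeOf e'.1 (initialWrt t Q) = 0 from
              hnorm _ hmemL _ (hmem' e' he'))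
        · exact hsfree _ (hmem' e' he')
      · intro e' he'
        have h1 := degreeOf_coeffWrt_le e'.1 t j ρ
        have h2 : MvPolynomial.degreeOf e'.1 ρ < MvPolynomial.degreeOf e'.1 e'.2 :=
          hred _ (hmem' e' he')
        omega
    calc ρ = ∑ d ∈ Finset.range (MvPolynomial.degreeOf t ρ + 1), X t ^ d * coeffWrt t d ρ :=
          sum_X_pow_coeffWrt le_rfl
      _ = 0 := by
          apply Finset.sum_eq_zero
          intro d _
          rw [hzero d, mul_zero]

/-- CT1: explicit pseudo-reduction of any polynomial by a normal triangular list. -/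
lemma reduce_exists (L : List (σ × MvPolynomial σ K)) :
    (L.map Prod.fst).Pairwise (· < ·) →
    (∀ e ∈ L, HasLV e.2 e.1) →
    (∀ e ∈ L, ∀ e' ∈ L, MvPolynomial.degreeOf e'.1 (initialWrt e.1 e.2) = 0) →
    ∀ h : MvPolynomial σ K, ∃ (N : ℕ) (ρ : MvPolynomial σ K),
      ((L.map fun e => initialWrt e.1 e.2).prod) ^ N * h - ρ ∈ spanList (L.map Prod.snd) ∧
      (∀ e ∈ L, MvPolynomial.degreeOf e.1 ρ < MvPolynomial.degreeOf e.1 e.2) ∧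
      (∀ t', (∀ e ∈ L, MvPolynomial.degreeOf t' e.2 = 0) →
        MvPolynomial.degreeOf t' ρ ≤ MvPolynomial.degreeOf t' h) := by
  induction L using List.reverseRecOn with
  | nil =>
    intro _ _ _ h
    refine ⟨0, h, ?_, by simp, fun t' _ => le_rfl⟩
    simp [spanList_nil]
  | append_singleton L' e IH =>
    obtain ⟨t, Q⟩ := e
    intro hsort hlv hnorm h
    have hmemL : (t, Q) ∈ L' ++ [(t, Q)] := by simp
    have hQlv : HasLV Q t := hlv _ hmemL
    have hQdeg : 1 ≤ MvPolynomial.degreeOf t Q := hQlv.degreeOf_pos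
    have hQ0 : Q ≠ 0 := hQlv.ne_zero'
    obtain ⟨hsort', hlt⟩ := sorted_last hsort
    have hmem' : ∀ e' ∈ L', e' ∈ L' ++ [(t, Q)] := fun e' he' => by simp [he']
    have hlvfree : ∀ e' ∈ L', MvPolynomial.degreeOf t e'.2 = 0 := fun e' he' =>
      (hlv _ (hmem' e' he')).degreeOf_eq_zero_of_lt (hlt e' he')
    obtain ⟨N₀, B, r, heq, hrdeg, hrfree⟩ := pseudoDiv t Q hQdeg h
    obtain ⟨N', ρ', hmem'', hred', hfree'⟩ := IH hsort'
      (fun e' he' => hlv _ (hmem' e' he'))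
      (fun e' he' e'' he'' => hnorm _ (hmem' e' he') _ (hmem' e'' he'')) r
    set i := initialWrt t Q with hi
    set π' := (L'.map fun e => initialWrt e.1 e.2).prod with hπ'
    have hπsplit : ((L' ++ [(t, Q)]).map fun e => initialWrt e.1 e.2).prod = π' * i := by
      rw [List.map_append, List.prod_append]
      simp [hπ', hi]
    set N := N₀ + N' with hN
    refine ⟨N, i ^ N' * π' ^ N₀ * ρ', ?_, ?_, ?_⟩
    · rw [hπsplit]
      have hg' : π' ^ N' * r - ρ' ∈ spanList (L'.map Prod.snd) := hmem''
      set g' := π' ^ N' * r - ρ' with hg'def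
      have hexpand : (π' * i) ^ N * h - i ^ N' * π' ^ N₀ * ρ'
          = i ^ N' * π' ^ N₀ * g'
            + (π' ^ N * i ^ N' * B) * Q := by
        calc (π' * i) ^ N * h - i ^ N' * π' ^ N₀ * ρ'
            = π' ^ N * (i ^ N' * (i ^ N₀ * h)) - i ^ N' * π' ^ N₀ * ρ' := by
              rw [hN]; ring
          _ = π' ^ N * (i ^ N' * (B * Q + r)) - i ^ N' * π' ^ N₀ * ρ' := by
              rw [heq]
          _ = i ^ N' * π' ^ N₀ * g'
              + (π' ^ N * i ^ N' * B) * Q := by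
              rw [hg'def, hN]
              ring
      rw [hexpand]
      apply Ideal.add_mem
      · apply Ideal.mul_mem_left
        apply spanList_mono (l := L'.map Prod.snd) ?_ hg'
        intro p hp
        rw [List.map_append]
        exact List.mem_append_left _ hp
      · apply Ideal.mul_mem_left
        apply mem_spanList
        rw [List.map_append]
        apply List.mem_append_right
        simp
    · intro e' he'
      rcases List.mem_append.mp he' with he' | he'
      · -- e' ∈ L'
        have h1 : MvPolynomial.degreeOf e'.1 i = 0 := by
          rw [hi]
          exact hnorm _ hmemL _ (hmem' e' he')
        have h2 : MvPolynomial.degreeOf e'.1 π' = 0 := by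
          rw [hπ']
          apply degreeOf_list_prod_eq_zero
          intro p hp
          obtain ⟨e'', he'', rfl⟩ := List.mem_map.mp hp
          exact hnorm _ (hmem' e'' he'') _ (hmem' e' he')
        have h3 := hred' e' he'
        have m1 := MvPolynomial.degreeOf_mul_le e'.1 (i ^ N' * π' ^ N₀) ρ'
        have m2 := MvPolynomial.degreeOf_mul_le e'.1 (i ^ N') (π' ^ N₀)
        have p1 := degreeOf_pow_eq_zero (t := e'.1) N' h1
        have p2 := degreeOf_pow_eq_zero (t := e'.1) N₀ h2
        omega
      · -- e' = (t, Q)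
        have he'' : e' = (t, Q) := by simpa using he'
        subst he''
        show MvPolynomial.degreeOf t (i ^ N' * π' ^ N₀ * ρ') < MvPolynomial.degreeOf t Q
        have h1 : MvPolynomial.degreeOf t i = 0 := degreeOf_initialWrt_self t Q
        have h2 : MvPolynomial.degreeOf t π' = 0 := by
          rw [hπ']
          apply degreeOf_list_prod_eq_zero
          intro p hp
          obtain ⟨e'', he'', rfl⟩ := List.mem_map.mp hp
          have := degreeOf_coeffWrt_le t e''.1 (MvPolynomial.degreeOf e''.1 e''.2) e''.2
          have h0 := hlvfree e'' he''
          have : MvPolynomial.degreeOf t (initialWrt e''.1 e''.2)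
              ≤ MvPolynomial.degreeOf t e''.2 := degreeOf_initialWrt_le t e''.1 e''.2
          omega
        have h3 : MvPolynomial.degreeOf t ρ' ≤ MvPolynomial.degreeOf t r := by
          apply hfree'
          exact hlvfree
        have m1 := MvPolynomial.degreeOf_mul_le t (i ^ N' * π' ^ N₀) ρ'
        have m2 := MvPolynomial.degreeOf_mul_le t (i ^ N') (π' ^ N₀)
        have p1 := degreeOf_pow_eq_zero (t := t) N' h1
        have p2 := degreeOf_pow_eq_zero (t := t) N₀ h2
        omega
    · intro t' ht'
      have hQfree : MvPolynomial.degreeOf t' Q = 0 := ht' _ hmemL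
      have h1 : MvPolynomial.degreeOf t' i = 0 := by
        rw [hi]
        have := degreeOf_initialWrt_le t' t Q
        omega
      have h2 : MvPolynomial.degreeOf t' π' = 0 := by
        rw [hπ']
        apply degreeOf_list_prod_eq_zero
        intro p hp
        obtain ⟨e'', he'', rfl⟩ := List.mem_map.mp hp
        have := degreeOf_initialWrt_le t' e''.1 e''.2
        have h0 := ht' _ (hmem' e'' he'')
        omega
      have h3 : MvPolynomial.degreeOf t' ρ' ≤ MvPolynomial.degreeOf t' r :=
        hfree' t' fun e'' he'' => ht' _ (hmem' e'' he'')
      have h4 := hrfree t' hQfree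
      have m1 := MvPolynomial.degreeOf_mul_le t' (i ^ N' * π' ^ N₀) ρ'
      have m2 := MvPolynomial.degreeOf_mul_le t' (i ^ N') (π' ^ N₀)
      have p1 := degreeOf_pow_eq_zero (t := t') N' h1
      have p2 := degreeOf_pow_eq_zero (t := t') N₀ h2
      omega

end Triangular
section SatLemma

variable {K : Type*} [Field K] {σ : Type*} [LinearOrder σ]

lemma mem_sat_iff {C : TriSet K σ} {p : MvPolynomial σ K} :
    p ∈ C.sat ↔ ∃ k : ℕ, C.prodInit ^ k * p ∈ C.ideal := Iff.rfl

lemma ideal_eq_spanList (C : TriSet K σ) :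
    C.ideal = spanList (C.elems.map Prod.snd) := by
  unfold TriSet.ideal spanList
  congr 1
  ext p
  simp only [Set.mem_setOf_eq, List.mem_map]
  constructor
  · rintro ⟨e, he, rfl⟩; exact ⟨e, he, rfl⟩
  · rintro ⟨e, he, rfl⟩; exact ⟨e, he, rfl⟩

lemma normal_inits {C : TriSet K σ} (hCn : C.Normal) :
    ∀ e ∈ C.elems, ∀ e' ∈ C.elems,
      MvPolynomial.degreeOf e'.1 (initialWrt e.1 e.2) = 0 := by
  intro e he e' he'
  apply degreeOf_eq_zero_of_not_mem_vars
  intro hmem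
  exact (hCn e he e'.1 hmem) (List.mem_map_of_mem (f := Prod.fst) he')

lemma sorted_fst (C : TriSet K σ) : (C.elems.map Prod.fst).Pairwise (· < ·) :=
  List.Pairwise.map _ (fun _ _ h => h) C.sorted

lemma initialWrt_elem_ne_zero {C : TriSet K σ} {e : σ × MvPolynomial σ K}
    (he : e ∈ C.elems) : initialWrt e.1 e.2 ≠ 0 :=
  initialWrt_ne_zero (C.hlv e he).ne_zero'

lemma prodInit_ne_zero (C : TriSet K σ) : C.prodInit ≠ 0 := by
  unfold TriSet.prodInit
  apply list_prod_ne_zero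
  intro p hp
  obtain ⟨e, he, rfl⟩ := List.mem_map.mp hp
  exact initialWrt_elem_ne_zero he

lemma degreeOf_prodInit_eq_zero {C : TriSet K σ} (hCn : C.Normal)
    {e' : σ × MvPolynomial σ K} (he' : e' ∈ C.elems) :
    MvPolynomial.degreeOf e'.1 C.prodInit = 0 := by
  unfold TriSet.prodInit
  apply degreeOf_list_prod_eq_zero
  intro p hp
  obtain ⟨e, he, rfl⟩ := List.mem_map.mp hp
  exact normal_inits hCn e he e' he'

/-- Main Lemma (L2): the coefficients, with respect to a variable `l` that is
"small" for `C` relative to `f`, of an element `f` of `sat(C)`, remain in `sat(C)`. -/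
lemma coeffWrt_mem_sat {C : TriSet K σ} (hCn : C.Normal) {f : MvPolynomial σ K}
    {l : σ} (hvars : ∀ j ∈ f.vars, j ≤ l)
    (hcase : ∀ e ∈ C.elems, e.1 = l →
      MvPolynomial.degreeOf l f < MvPolynomial.degreeOf l e.2)
    (hf : f ∈ C.sat) :
    ∀ d, coeffWrt l d f ∈ C.sat := by
  classical
  have hMAIN : ∀ (M : List (σ × MvPolynomial σ K)), M.Sublist C.elems →
      ∀ s : MvPolynomial σ K, s ≠ 0 →
      (∀ e ∈ C.elems, MvPolynomial.degreeOf e.1 s = 0) →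
      s * f ∈ spanList (M.map Prod.snd) →
      ∀ d, coeffWrt l d f ∈ C.sat := by
    intro M
    induction M using List.reverseRecOn with
    | nil =>
      intro _ s hs0 _ hmem d
      rw [List.map_nil, spanList_nil, Ideal.mem_bot] at hmem
      rcases mul_eq_zero.mp hmem with h | h
      · exact absurd h hs0
      · rw [h, coeffWrt_zero_poly]
        exact Ideal.zero_mem _
    | append_singleton M' e IH =>
      obtain ⟨t, Q⟩ := e
      intro hsub s hs0 hsfree hmem d
      have hsub' : M'.Sublist C.elems :=
        List.Sublist.trans (List.sublist_append_left M' [(t, Q)]) hsub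
      have hmemC : (t, Q) ∈ C.elems := hsub.subset (by simp)
      have hmemC' : ∀ e' ∈ M', e' ∈ C.elems := fun e' he' => hsub'.subset he'
      have hQlv : HasLV Q t := C.hlv _ hmemC
      have hQdeg : 1 ≤ MvPolynomial.degreeOf t Q := hQlv.degreeOf_pos
      have hQ0 : Q ≠ 0 := hQlv.ne_zero'
      have hsortM : ((M' ++ [(t, Q)]).map Prod.fst).Pairwise (· < ·) :=
        List.Pairwise.map _ (fun _ _ h => h) (C.sorted.sublist hsub)
      obtain ⟨hsortM', hlt⟩ := sorted_last hsortM
      rcases lt_or_ge t l with htl | hlt2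
      · -- termination case: every element of M has leading variable < l
        set M := M' ++ [(t, Q)] with hM
        have hsortM2 : (M.map Prod.fst).Pairwise (· < ·) := hsortM
        have hlvM : ∀ e ∈ M, HasLV e.2 e.1 := fun e he => C.hlv e (hsub.subset he)
        have hnormM : ∀ e ∈ M, ∀ e' ∈ M,
            MvPolynomial.degreeOf e'.1 (initialWrt e.1 e.2) = 0 := fun e he e' he' =>
          normal_inits hCn e (hsub.subset he) e' (hsub.subset he')
        have hltl : ∀ e ∈ M, e.1 < l := by
          intro e he
          rcases List.mem_append.mp he with h | h
          · exact lt_trans (hlt e h) htl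
          · have : e = (t, Q) := by simpa using h
            rw [this]; exact htl
        have hlfreeM : ∀ e ∈ M, MvPolynomial.degreeOf l e.2 = 0 := fun e he =>
          (hlvM e he).degreeOf_eq_zero_of_lt (hltl e he)
        set π := (M.map fun e => initialWrt e.1 e.2).prod with hπ
        have hπ0 : π ≠ 0 := by
          rw [hπ]
          apply list_prod_ne_zero
          intro p hp
          obtain ⟨e, he, rfl⟩ := List.mem_map.mp hp
          exact initialWrt_elem_ne_zero (hsub.subset he)
        have hπlfree : MvPolynomial.degreeOf l π = 0 := by
          rw [hπ]
          apply degreeOf_list_prod_eq_zero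
          intro p hp
          obtain ⟨e, he, rfl⟩ := List.mem_map.mp hp
          have h1 := degreeOf_initialWrt_le l e.1 e.2
          have h2 := hlfreeM e he
          omega
        have hπefree : ∀ e' ∈ M, MvPolynomial.degreeOf e'.1 π = 0 := by
          intro e' he'
          rw [hπ]
          apply degreeOf_list_prod_eq_zero
          intro p hp
          obtain ⟨e, he, rfl⟩ := List.mem_map.mp hp
          exact hnormM e he e' he'
        set D := MvPolynomial.degreeOf l f with hD
        -- reduce each coefficient
        choose Nr ρr hmemr hredr hfreer using fun d' : ℕ =>
          reduce_exists M hsortM2 hlvM hnormM (coeffWrt l d' f)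
        have hρrlfree : ∀ d', MvPolynomial.degreeOf l (ρr d') = 0 := by
          intro d'
          have h1 := hfreer d' l hlfreeM
          have h2 := degreeOf_coeffWrt_self l d' f
          omega
        set E := (Finset.range (D + 1)).sup Nr with hE
        set ρ := ∑ d' ∈ Finset.range (D + 1),
          X l ^ d' * (π ^ (E - Nr d') * ρr d') with hρ
        have hsρ : s * ρ ∈ spanList (M.map Prod.snd) := by
          have hdecomp : π ^ E * (s * f) = ∑ d' ∈ Finset.range (D + 1),
              X l ^ d' * (s * (π ^ (E - Nr d') * (π ^ (Nr d') * coeffWrt l d' f))) := by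
            conv_lhs => rw [sum_X_pow_coeffWrt (t := l) (f := f) (D := D) le_rfl]
            rw [Finset.mul_sum, Finset.mul_sum]
            apply Finset.sum_congr rfl
            intro d' hd'
            have : π ^ E = π ^ (E - Nr d') * π ^ (Nr d') := by
              rw [← pow_add]
              congr 1
              have := Finset.le_sup (f := Nr) hd'
              omega
            rw [this]; ring
          have hsub2 : s * ρ = π ^ E * (s * f)
              - ∑ d' ∈ Finset.range (D + 1),
                X l ^ d' * (s * (π ^ (E - Nr d')
                  * (π ^ (Nr d') * coeffWrt l d' f - ρr d'))) := by
            rw [hdecomp, hρ, Finset.mul_sum, ← Finset.sum_sub_distrib]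
            apply Finset.sum_congr rfl
            intro d' _
            ring
          rw [hsub2]
          apply Ideal.sub_mem
          · exact Ideal.mul_mem_left _ _ hmem
          · apply Ideal.sum_mem
            intro d' _
            exact Ideal.mul_mem_left _ _ (Ideal.mul_mem_left _ _
              (Ideal.mul_mem_left _ _ (hmemr d')))
        have hρred : ∀ e ∈ M, MvPolynomial.degreeOf e.1 ρ
            < MvPolynomial.degreeOf e.1 e.2 := by
          intro e he
          have hd2 : 1 ≤ MvPolynomial.degreeOf e.1 e.2 := (hlvM e he).degreeOf_pos
          have : MvPolynomial.degreeOf e.1 ρ ≤ MvPolynomial.degreeOf e.1 e.2 - 1 := by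
            rw [hρ]
            apply degreeOf_sum_le
            intro d' _
            have hXfree : MvPolynomial.degreeOf e.1 ((X l : MvPolynomial σ K) ^ d') = 0 :=
              degreeOf_X_pow_eq_zero (fun hEq => absurd hEq (by
                have := hltl e he
                intro h2
                exact absurd (h2 ▸ this) (lt_irrefl _))) d'
            have m1 := MvPolynomial.degreeOf_mul_le e.1
              ((X l : MvPolynomial σ K) ^ d') (π ^ (E - Nr d') * ρr d')
            have m2 := MvPolynomial.degreeOf_mul_le e.1 (π ^ (E - Nr d')) (ρr d')
            have p1 := degreeOf_pow_eq_zero (t := e.1) (E - Nr d') (hπefree e he)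
            have hr := hredr d' e he
            omega
          omega
        have hsfreeM : ∀ e ∈ M, MvPolynomial.degreeOf e.1 s = 0 := fun e he =>
          hsfree e (hsub.subset he)
        have hρ0 : ρ = 0 :=
          reduced_mem_span_eq_zero M hsortM2 hlvM hnormM s ρ hs0 hsfreeM hρred hsρ
        -- extract the coefficients of ρ
        have hcoeffρ : ∀ d' ∈ Finset.range (D + 1), π ^ (E - Nr d') * ρr d' = 0 := by
          intro d' hd'
          have h1 : coeffWrt l d' ρ = π ^ (E - Nr d') * ρr d' := by
            rw [hρ, coeffWrt_sum]
            rw [Finset.sum_eq_single d']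
            · apply coeffWrt_X_pow_mul ?_ d' d' |>.trans (if_pos rfl)
              apply degreeOf_mul_eq_zero (degreeOf_pow_eq_zero _ hπlfree) (hρrlfree d')
            · intro b hb hbne
              rw [coeffWrt_X_pow_mul (degreeOf_mul_eq_zero
                  (degreeOf_pow_eq_zero _ hπlfree) (hρrlfree b)) b d', if_neg]
              omega
            · intro hd''
              exact absurd hd' hd''
          rw [← h1, hρ0, coeffWrt_zero_poly]
        have hρr0 : ∀ d' ∈ Finset.range (D + 1), ρr d' = 0 := by
          intro d' hd'
          rcases mul_eq_zero.mp (hcoeffρ d' hd') with h | h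
          · exact absurd h (pow_ne_zero _ hπ0)
          · exact h
        -- conclude membership in the saturation
        rcases le_or_gt d D with hdD | hdD
        · have hmemf : π ^ (Nr d) * coeffWrt l d f ∈ spanList (M.map Prod.snd) := by
            have := hmemr d
            rw [hρr0 d (Finset.mem_range.mpr (by omega)), sub_zero] at this
            exact this
          rw [mem_sat_iff]
          obtain ⟨u, hu⟩ : π ∣ C.prodInit := by
            unfold TriSet.prodInit
            rw [hπ]
            exact List.Sublist.prod_dvd_prod (List.Sublist.map _ hsub)
          refine ⟨Nr d, ?_⟩
          have : C.prodInit ^ Nr d * coeffWrt l d f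
              = u ^ Nr d * (π ^ (Nr d) * coeffWrt l d f) := by
            rw [hu]; ring
          rw [this, ideal_eq_spanList]
          apply Ideal.mul_mem_left
          apply spanList_mono ?_ hmemf
          intro p hp
          obtain ⟨e, he, rfl⟩ := List.mem_map.mp hp
          exact List.mem_map_of_mem (f := Prod.snd) (hsub.subset he)
        · rw [coeffWrt_eq_zero_of_degreeOf_lt (by omega)]
          exact Ideal.zero_mem _
      · -- kill step: `l ≤ t`
        have hgdeg : MvPolynomial.degreeOf t (s * f)
            < MvPolynomial.degreeOf t Q := by
          have h1 := MvPolynomial.degreeOf_mul_le t s f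
          have h2 : MvPolynomial.degreeOf t s = 0 := hsfree _ hmemC
          rcases lt_or_eq_of_le hlt2 with hlt3 | hEq
          · have h3 : MvPolynomial.degreeOf t f = 0 := by
              apply degreeOf_eq_zero_of_not_mem_vars
              intro hmemv
              exact absurd (hvars t hmemv) (not_le.mpr hlt3)
            omega
          · have h3 : MvPolynomial.degreeOf l f < MvPolynomial.degreeOf l Q :=
              hcase _ hmemC hEq.symm
            rw [← hEq] at h1 h2 ⊢
            omega
        have hlfree : ∀ p ∈ M'.map Prod.snd, MvPolynomial.degreeOf t p = 0 := by
          intro p hp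
          obtain ⟨e', he', rfl⟩ := List.mem_map.mp hp
          exact (C.hlv _ (hmemC' e' he')).degreeOf_eq_zero_of_lt (hlt e' he')
        have hspan : s * f ∈ Ideal.span (insert Q {p | p ∈ M'.map Prod.snd}) := by
          rw [← spanList_append_singleton]
          have : (M' ++ [(t, Q)]).map Prod.snd = M'.map Prod.snd ++ [Q] := by
            rw [List.map_append]; rfl
          rwa [this] at hmem
        obtain ⟨N, hN⟩ := step_lemma hQdeg hQ0 hlfree hgdeg hspan
        set i := initialWrt t Q with hi
        have hi0 : i ≠ 0 := initialWrt_ne_zero hQ0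
        set s' := i ^ N * s with hs'
        have hs'0 : s' ≠ 0 := mul_ne_zero (pow_ne_zero _ hi0) hs0
        have hs'free : ∀ e ∈ C.elems, MvPolynomial.degreeOf e.1 s' = 0 := by
          intro e he
          apply degreeOf_mul_eq_zero
          · apply degreeOf_pow_eq_zero
            rw [hi]
            exact normal_inits hCn _ hmemC e he
          · exact hsfree e he
        have hs'mem : s' * f ∈ spanList (M'.map Prod.snd) := by
          have hitfree : MvPolynomial.degreeOf t (i ^ N) = 0 :=
            degreeOf_pow_eq_zero N (by rw [hi]; exact degreeOf_initialWrt_self t Q)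
          have hdecomp : s' * f = ∑ d' ∈ Finset.range
              (MvPolynomial.degreeOf t (s * f) + 1),
              X t ^ d' * (i ^ N * coeffWrt t d' (s * f)) := by
            have h1 : s' * f = i ^ N * (s * f) := by rw [hs']; ring
            rw [h1]
            conv_lhs => rw [sum_X_pow_coeffWrt (t := t) (f := s * f) le_rfl]
            rw [Finset.mul_sum]
            apply Finset.sum_congr rfl
            intro d' _
            ring
          rw [hdecomp]
          apply Ideal.sum_mem
          intro d' _
          exact Ideal.mul_mem_left _ _ (hN d')
        exact IH hsub' s' hs'0 hs'free hs'mem d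
  obtain ⟨k, hk⟩ := mem_sat_iff.mp hf
  apply hMAIN C.elems (List.Sublist.refl _) (C.prodInit ^ k)
  · apply pow_ne_zero
    exact prodInit_ne_zero C
  · intro e he
    exact degreeOf_pow_eq_zero k (degreeOf_prodInit_eq_zero hCn he)
  · rw [← ideal_eq_spanList]
    exact hk

end SatLemma
section Lex

variable {K : Type*} [Field K] {σ : Type*} [LinearOrder σ]

lemma lexLe_refl (a : σ →₀ ℕ) : lexLe a a := Or.inl rfl

lemma lexLe_total (a b : σ →₀ ℕ) : lexLe a b ∨ lexLe b a := by
  classical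
  by_cases hab : a = b
  · exact Or.inl (Or.inl hab)
  · have hne : ∃ j ∈ a.support ∪ b.support, a j ≠ b j := by
      by_contra hall
      push_neg at hall
      apply hab
      ext j
      by_cases hj : j ∈ a.support ∪ b.support
      · exact hall j hj
      · rw [Finset.mem_union] at hj
        push_neg at hj
        have h1 := Finsupp.notMem_support_iff.mp hj.1
        have h2 := Finsupp.notMem_support_iff.mp hj.2
        rw [h1, h2]
    set S := (a.support ∪ b.support).filter (fun j => a j ≠ b j) with hS
    have hSne : S.Nonempty := by
      obtain ⟨j, hj, hja⟩ := hne
      exact ⟨j, Finset.mem_filter.mpr ⟨hj, hja⟩⟩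
    set i := S.max' hSne with hi
    have hiS : i ∈ S := S.max'_mem hSne
    have hidiff : a i ≠ b i := (Finset.mem_filter.mp hiS).2
    have habove : ∀ j, i < j → a j = b j := by
      intro j hj
      by_contra hne'
      have hjS : j ∈ S := by
        rw [hS, Finset.mem_filter]
        refine ⟨?_, hne'⟩
        rw [Finset.mem_union]
        by_contra hmem
        push_neg at hmem
        have h1 := Finsupp.notMem_support_iff.mp hmem.1
        have h2 := Finsupp.notMem_support_iff.mp hmem.2
        exact hne' (h1.trans h2.symm)
      have := S.le_max' j hjS
      rw [← hi] at this
      exact absurd this (not_le.mpr hj)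
    rcases lt_or_gt_of_ne hidiff with h | h
    · exact Or.inl (Or.inr ⟨i, h, habove⟩)
    · exact Or.inr (Or.inr ⟨i, h, fun j hj => (habove j hj).symm⟩)

lemma lexLe_antisymm {a b : σ →₀ ℕ} (h1 : lexLe a b) (h2 : lexLe b a) : a = b := by
  rcases h1 with h1 | ⟨i₁, hlt₁, heq₁⟩
  · exact h1
  rcases h2 with h2 | ⟨i₂, hlt₂, heq₂⟩
  · exact h2.symm
  exfalso
  rcases lt_trichotomy i₁ i₂ with h | h | h
  · have := heq₁ i₂ h
    omega
  · subst h
    omega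
  · have := heq₂ i₁ h
    omega

lemma lexLe_trans {a b c : σ →₀ ℕ} (h1 : lexLe a b) (h2 : lexLe b c) : lexLe a c := by
  rcases h1 with h1 | ⟨i₁, hlt₁, heq₁⟩
  · rwa [h1]
  rcases h2 with h2 | ⟨i₂, hlt₂, heq₂⟩
  · rw [← h2]
    exact Or.inr ⟨i₁, hlt₁, heq₁⟩
  rcases lt_trichotomy i₁ i₂ with h | h | h
  · refine Or.inr ⟨i₂, ?_, fun j hj => (heq₁ j (lt_trans h hj)).trans (heq₂ j hj)⟩
    rw [heq₁ i₂ h]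
    exact hlt₂
  · subst h
    refine Or.inr ⟨i₁, by omega, fun j hj => (heq₁ j hj).trans (heq₂ j hj)⟩
  · refine Or.inr ⟨i₁, ?_, fun j hj => (heq₁ j hj).trans (heq₂ j (lt_trans h hj))⟩
    rw [← heq₂ i₁ h]
    exact hlt₁

lemma exists_max_lexLe (s : Finset (σ →₀ ℕ)) (hs : s.Nonempty) :
    ∃ m ∈ s, ∀ m' ∈ s, lexLe m' m := by
  classical
  induction s using Finset.cons_induction with
  | empty => exact absurd hs (by simp)
  | cons a s ha ih =>
    rcases s.eq_empty_or_nonempty with h | h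
    · subst h
      exact ⟨a, by simp, fun m' hm' => by
        simp at hm'
        rw [hm']
        exact lexLe_refl a⟩
    · obtain ⟨m, hm, hmax⟩ := ih h
      rcases lexLe_total a m with hc | hc
      · refine ⟨m, Finset.mem_cons.mpr (Or.inr hm), fun m' hm' => ?_⟩
        rcases Finset.mem_cons.mp hm' with h' | h'
        · rwa [h']
        · exact hmax m' h'
      · refine ⟨a, Finset.mem_cons_self a s, fun m' hm' => ?_⟩
        rcases Finset.mem_cons.mp hm' with h' | h'
        · rw [h']; exact lexLe_refl a
        · exact lexLe_trans (hmax m' h') hc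

lemma exists_isLeadMon {f : MvPolynomial σ K} (hf : f ≠ 0) : ∃ m, IsLeadMon f m := by
  have hne : f.support.Nonempty := by rwa [MvPolynomial.support_nonempty]
  obtain ⟨m, hm, hmax⟩ := exists_max_lexLe f.support hne
  exact ⟨m, hm, hmax⟩

lemma leadMon_unique {f : MvPolynomial σ K} {m m' : σ →₀ ℕ}
    (h : IsLeadMon f m) (h' : IsLeadMon f m') : m = m' :=
  lexLe_antisymm (h'.2 m h.1) (h.2 m' h'.1)

lemma supp_zero_above {f : MvPolynomial σ K} {l : σ} (hlv : HasLV f l)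
    {m : σ →₀ ℕ} (hm : m ∈ f.support) {j : σ} (hj : l < j) : m j = 0 := by
  have := hlv.degreeOf_eq_zero_of_lt hj
  exact degreeOf_eq_zero_iff_forall.mp this m hm

lemma leadMon_lv {f : MvPolynomial σ K} {l : σ} (hlv : HasLV f l) {m : σ →₀ ℕ}
    (hm : IsLeadMon f m) : m l = MvPolynomial.degreeOf l f := by
  have hle : m l ≤ MvPolynomial.degreeOf l f :=
    MvPolynomial.degreeOf_le_iff.mp (le_refl (MvPolynomial.degreeOf l f)) m hm.1
  have hne : f.support.Nonempty := by
    rw [MvPolynomial.support_nonempty]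
    exact hlv.ne_zero'
  obtain ⟨m₀, hm₀, hsup⟩ := Finset.exists_mem_eq_sup f.support hne (fun m => m l)
  have hd : m₀ l = MvPolynomial.degreeOf l f := by
    rw [MvPolynomial.degreeOf_eq_sup, hsup]
  rcases hm.2 m₀ hm₀ with h | ⟨i, hlt, heq⟩
  · rw [← h, hd]
  · rcases lt_trichotomy i l with hc | hc | hc
    · rw [← heq l hc] at hle ⊢
      omega
    · rw [hc] at hlt
      omega
    · have h1 := supp_zero_above hlv hm.1 hc
      have h2 := supp_zero_above hlv hm₀ hc
      omega

lemma isLeadMon_initialWrt {f : MvPolynomial σ K} {l : σ} (hlv : HasLV f l)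
    {m : σ →₀ ℕ} (hm : IsLeadMon f m) :
    IsLeadMon (initialWrt l f) (m.update l 0) := by
  have hml : m l = MvPolynomial.degreeOf l f := leadMon_lv hlv hm
  constructor
  · exact update_mem_support_coeffWrt hm.1 hml
  · intro m'' hm''
    unfold initialWrt at hm''
    rw [mem_support_coeffWrt] at hm''
    obtain ⟨hm''l, hm''supp⟩ := hm''
    rcases hm.2 _ hm''supp with h | ⟨i, hlt, heq⟩
    · left
      have : m'' = (m''.update l (MvPolynomial.degreeOf l f)).update l 0 := by
        rw [upd_upd, ← hm''l, upd_self]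
      rw [this, h]
    · rcases lt_trichotomy i l with hc | hc | hc
      · right
        refine ⟨i, ?_, ?_⟩
        · have h1 : (m''.update l (MvPolynomial.degreeOf l f)) i = m'' i := by
            rw [updApply, if_neg (ne_of_lt hc)]
          have h2 : (m.update l 0) i = m i := by
            rw [updApply, if_neg (ne_of_lt hc)]
          omega
        · intro j hj
          rcases eq_or_ne j l with hjl | hjl
          · subst hjl
            rw [updApply, if_pos rfl, hm''l]
          · have h1 := heq j hj
            rw [updApply, if_neg hjl] at h1
            rw [updApply, if_neg hjl, ← h1]
      · exfalso
        subst hc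
        rw [updApply, if_pos rfl, hml] at hlt
        omega
      · exfalso
        have h1 : (m''.update l (MvPolynomial.degreeOf l f)) i = m'' i := by
          rw [updApply, if_neg (ne_of_gt hc)]
        have h2 := supp_zero_above hlv hm''supp hc
        rw [h1] at hlt
        have h3 := supp_zero_above hlv hm.1 hc
        omega

end Lex
section Main

variable {K : Type*} [Field K] {σ : Type*} [LinearOrder σ]

lemma no_constant_in_GB {C : TriSet K σ} (hCn : C.Normal) {Gb : Set (MvPolynomial σ K)}
    (hGb : IsReducedGB Gb C.sat) {g : MvPolynomial σ K} (hg : g ∈ Gb)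
    (hvars : g.vars = ∅) : False := by
  have hg0 : g ≠ 0 := fun h0 => hGb.2.1 (h0 ▸ hg)
  have hsatg : g ∈ C.sat := hGb.1.2.1 hg
  obtain ⟨k, hk⟩ := mem_sat_iff.mp hsatg
  have hzero : g = 0 := by
    apply reduced_mem_span_eq_zero C.elems (sorted_fst C) C.hlv (normal_inits hCn)
      (C.prodInit ^ k) g (pow_ne_zero _ (prodInit_ne_zero C)) ?_ ?_ ?_
    · intro e he
      exact degreeOf_pow_eq_zero k (degreeOf_prodInit_eq_zero hCn he)
    · intro e he
      have h1 : MvPolynomial.degreeOf e.1 g = 0 :=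
        degreeOf_eq_zero_of_not_mem_vars (by rw [hvars]; simp)
      have h2 : 1 ≤ MvPolynomial.degreeOf e.1 e.2 := (C.hlv e he).degreeOf_pos
      omega
    · rw [← ideal_eq_spanList]
      exact hk
  exact hg0 hzero

lemma key_lv {C : TriSet K σ} (hCn : C.Normal) {Gb : Set (MvPolynomial σ K)}
    (hGb : IsReducedGB Gb C.sat) {g : MvPolynomial σ K} (hg : g ∈ Gb) {l : σ}
    (hlv : HasLV g l) : l ∈ C.lvs := by
  by_contra hnot
  have hsatg : g ∈ C.sat := hGb.1.2.1 hg
  have hg0 : g ≠ 0 := hlv.ne_zero'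
  have hinitmem : initialWrt l g ∈ C.sat := by
    exact coeffWrt_mem_sat hCn hlv.2
      (fun e he hEq =>
        absurd (show l ∈ C.lvs from hEq ▸ List.mem_map_of_mem (f := Prod.fst) he) hnot)
      hsatg (MvPolynomial.degreeOf l g)
  have hinit0 : initialWrt l g ≠ 0 := initialWrt_ne_zero hg0
  obtain ⟨gh, hgh, mf, mg', hmf, hmg', hdvd⟩ := hGb.1.2.2 _ hinitmem hinit0
  obtain ⟨m, hm⟩ := exists_isLeadMon hg0
  have hlm3 := isLeadMon_initialWrt hlv hm
  have hmf_eq : mf = m.update l 0 := leadMon_unique hmf hlm3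
  have hml : m l = MvPolynomial.degreeOf l g := leadMon_lv hlv hm
  have hdlpos : 1 ≤ MvPolynomial.degreeOf l g := hlv.degreeOf_pos
  have hne : gh ≠ g := by
    intro hEq
    subst hEq
    have hmg'm : mg' = m := leadMon_unique hmg' hm
    have h2 := hdvd l
    rw [hmg'm, hmf_eq, updApply, if_pos rfl] at h2
    omega
  refine hGb.2.2.2 g hg gh hgh hne m hm.1 mg' hmg' ?_
  intro j
  have h3 := hdvd j
  rw [hmf_eq, updApply] at h3
  by_cases hj : j = l
  · subst hj
    rw [if_pos rfl] at h3
    omega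
  · rwa [if_neg hj] at h3

end Main
end CharDec

open CharDec MvPolynomial

/-- Let `(G, C)` be a characteristic pair, `Ḡ` the reduced
lex Gröbner basis of `sat(C)` and `C̄` the W-characteristic set of `⟨Ḡ⟩`.
Then the set of leading variables of `Ḡ` equals that of `G` (equivalently,
the parameters of `C̄` coincide with those of `C`). -/
theorem stmt_12 {K : Type*} [Field K] {n : ℕ}
    (G Gb : Set (MvPolynomial (Fin n) K)) (C Cb : TriSet K (Fin n))
    (hG : IsReducedGB G (Ideal.span G)) (hC : IsWCharOf C G) (hCn : C.Normal)
    (hGb : IsReducedGB Gb C.sat) (hCb : IsWCharOf Cb Gb) :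
    {i : Fin n | ∃ g ∈ G, HasLV g i} = {i : Fin n | ∃ g ∈ Gb, HasLV g i} := by
  ext i
  simp only [Set.mem_setOf_eq]
  constructor
  · rintro ⟨g, hgG, hlvg⟩
    have hiC : i ∈ C.lvs := hC.2 g hgG i hlvg
    have hiC' : i ∈ C.elems.map Prod.fst := hiC
    obtain ⟨e, he, hfst⟩ := List.mem_map.mp hiC'
    have hCiG : e.2 ∈ G := (hC.1 e he).1
    have hCi0 : e.2 ≠ 0 := fun h0 => hG.2.1 (h0 ▸ hCiG)
    have hCisat : e.2 ∈ C.sat := by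
      rw [mem_sat_iff]
      refine ⟨0, ?_⟩
      rw [pow_zero, one_mul]
      exact Ideal.subset_span ⟨e, he, rfl⟩
    obtain ⟨gb, hgb, mf, mg, hmf, hmg, hdvd⟩ := hGb.1.2.2 _ hCisat hCi0
    have hCilv : HasLV e.2 i := by rw [← hfst]; exact C.hlv e he
    have hvne : gb.vars.Nonempty := by
      by_contra h
      rw [Finset.not_nonempty_iff_eq_empty] at h
      exact no_constant_in_GB hCn hGb hgb h
    set l := gb.vars.max' hvne with hl
    have hlvgb : HasLV gb l := ⟨Finset.max'_mem _ _, fun j hj => Finset.le_max' _ j hj⟩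
    rcases eq_or_ne l i with hEq | hNe
    · exact ⟨gb, hgb, hEq ▸ hlvgb⟩
    · exfalso
      have hlC : l ∈ C.lvs := key_lv hCn hGb hgb hlvgb
      have hmgl : mg l = MvPolynomial.degreeOf l gb := leadMon_lv hlvgb hmg
      have hmgl1 : 1 ≤ mg l := by
        rw [hmgl]
        exact hlvgb.degreeOf_pos
      have hmfl : 1 ≤ mf l := le_trans hmgl1 (hdvd l)
      have hli : l ≤ i := by
        have hmem : l ∈ e.2.vars := (MvPolynomial.mem_vars l).mpr
          ⟨mf, hmf.1, Finsupp.mem_support_iff.mpr (by omega)⟩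
        exact hCilv.2 l hmem
      have hlti : l < i := lt_of_le_of_ne hli hNe
      have hmfi : mf i = MvPolynomial.degreeOf i e.2 := leadMon_lv hCilv hmf
      have hsupp : mf.update i 0 ∈ (initialWrt i e.2).support :=
        update_mem_support_coeffWrt hmf.1 hmfi
      have hlvars : l ∈ (initialWrt i e.2).vars := (MvPolynomial.mem_vars l).mpr
        ⟨mf.update i 0, hsupp, Finsupp.mem_support_iff.mpr
          (by rw [updApply, if_neg (ne_of_lt hlti)]; omega)⟩
      have hparam : C.IsParam l := hCn e he l (by rw [hfst]; exact hlvars)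
      exact hparam hlC
  · rintro ⟨g, hgGb, hlvg⟩
    have hiC : i ∈ C.lvs := key_lv hCn hGb hgGb hlvg
    have hiC' : i ∈ C.elems.map Prod.fst := hiC
    obtain ⟨e, he, hfst⟩ := List.mem_map.mp hiC'
    exact ⟨e.2, (hC.1 e he).1, by rw [← hfst]; exact C.hlv e he⟩
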